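/- Let n ≥ 2 and let M be a nonempty subset of Fin n with t = |M| and t < n. In EuclideanSpace ℂ (Fin n), define the oracle O acting by (O x)_i = −x_i if i ∈ M and (O x)_i = x_i otherwise, the uniform superposition Ψ = (1/√n) Σ_{i} e_i, the reflection R x = 2⟪Ψ, x⟫ Ψ − x, and the Grover operator G = R ∘ O. Let θ = arcsin √(t/n). Then for every natural number k, the probability of measuring a marked element after k Grover iterations satisfies Σ_{i∈M} ‖(G^k Ψ)_i‖² = sin²((2k+1)θ). -/

import Mathlib

lemma grover_marked (sn st su s c : ℝ) (hsn : sn ≠ 0) (hst : st ≠ 0) (hsu : su ≠ 0)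
    (hp : sn * sn = st * st + su * su) :
    2 * (sn⁻¹ * (st * st * (-(s / st)) + su * su * (c / su))) * sn⁻¹ + s / st
      = (s * ((su / sn) ^ 2 - (st / sn) ^ 2) + c * (2 * (st / sn) * (su / sn))) / st := by
  field_simp
  linear_combination s * hp

lemma grover_unmarked (sn st su s c : ℝ) (hsn : sn ≠ 0) (hst : st ≠ 0) (hsu : su ≠ 0)
    (hp : sn * sn = st * st + su * su) :
    2 * (sn⁻¹ * (st * st * (-(s / st)) + su * su * (c / su))) * sn⁻¹ - c / su
      = (c * ((su / sn) ^ 2 - (st / sn) ^ 2) - s * (2 * (st / sn) * (su / sn))) / su := by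
  field_simp
  linear_combination (-c) * hp

theorem grover_success_probability (n : ℕ) (hn : 2 ≤ n) (M : Finset (Fin n))
    (hM : M.Nonempty) (t : ℕ) (ht : t = M.card) (htn : t < n)
    (Ψ : EuclideanSpace ℂ (Fin n))
    (hΨ : ∀ i, Ψ i = ((Real.sqrt n)⁻¹ : ℂ))
    (O R G : EuclideanSpace ℂ (Fin n) → EuclideanSpace ℂ (Fin n))
    (hO : ∀ x, ∀ i, O x i = if i ∈ M then -x i else x i)
    (hR : ∀ x, R x = (2 * (inner ℂ Ψ x : ℂ)) • Ψ - x)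
    (hG : ∀ x, G x = R (O x))
    (θ : ℝ) (hθ : θ = Real.arcsin (Real.sqrt ((t : ℝ) / n))) :
    ∀ k : ℕ, ∑ i ∈ M, ‖(G^[k] Ψ) i‖ ^ 2 = Real.sin ((2 * (k : ℝ) + 1) * θ) ^ 2 := by
  have hn0 : (0 : ℝ) < n := by positivity
  have ht0 : 0 < t := ht ▸ hM.card_pos
  have ht0' : (0 : ℝ) < t := by exact_mod_cast ht0
  have hnt0 : (0 : ℝ) < (n : ℝ) - t := by
    have : (t : ℝ) < n := by exact_mod_cast htn
    linarith
  set sn := Real.sqrt n with hsn_def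
  set st := Real.sqrt t with hst_def
  set su := Real.sqrt ((n : ℝ) - t) with hsu_def
  have hsn0 : 0 < sn := Real.sqrt_pos.2 hn0
  have hst0 : 0 < st := Real.sqrt_pos.2 ht0'
  have hsu0 : 0 < su := Real.sqrt_pos.2 hnt0
  have hsn2 : sn * sn = n := Real.mul_self_sqrt hn0.le
  have hst2 : st * st = t := Real.mul_self_sqrt ht0'.le
  have hsu2 : su * su = (n : ℝ) - t := Real.mul_self_sqrt hnt0.le
  have hp : sn * sn = st * st + su * su := by rw [hsn2, hst2, hsu2]; ring
  -- trig values
  have harg1 : Real.sqrt ((t:ℝ)/n) ≤ 1 := by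
    rw [show (1:ℝ) = Real.sqrt 1 from (Real.sqrt_one).symm]
    exact Real.sqrt_le_sqrt (by rw [div_le_one hn0]; exact_mod_cast htn.le)
  have hsinθ : Real.sin θ = st / sn := by
    rw [hθ, Real.sin_arcsin (by linarith [Real.sqrt_nonneg ((t:ℝ)/n)]) harg1,
      Real.sqrt_div ht0'.le]
  have hcosθ : Real.cos θ = su / sn := by
    rw [hθ, Real.cos_arcsin, Real.sq_sqrt (by positivity),
      show 1 - (t:ℝ)/n = ((n:ℝ) - t)/n by field_simp,
      Real.sqrt_div hnt0.le]
  have hsum : ∀ (ca cb : ℂ), ∑ j : Fin n, (if j ∈ M then ca else cb)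
      = (t : ℂ) * ca + ((n : ℂ) - t) * cb := by
    intro ca cb
    rw [Finset.sum_ite, Finset.sum_const, Finset.sum_const, Finset.filter_mem_eq_inter,
        Finset.univ_inter]
    have h2 : Finset.univ.filter (fun j => j ∉ M) = Mᶜ := by
      ext j; simp
    rw [h2, Finset.card_compl, ← ht]
    simp only [nsmul_eq_mul, Fintype.card_fin]
    push_cast [Nat.cast_sub htn.le]
    ring
  have key : ∀ k : ℕ, ∀ i : Fin n, (G^[k] Ψ) i =
      if i ∈ M then ((Real.sin ((2 * (k : ℝ) + 1) * θ) / st : ℝ) : ℂ)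
      else ((Real.cos ((2 * (k : ℝ) + 1) * θ) / su : ℝ) : ℂ) := by
    intro k
    induction k with
    | zero =>
      intro i
      simp only [Function.iterate_zero, id_eq, hΨ i]
      split
      · have h0 : sn⁻¹ = Real.sin ((2 * ((0 : ℕ) : ℝ) + 1) * θ) / st := by
          norm_num [hsinθ]
          field_simp
        exact_mod_cast congrArg Complex.ofReal h0
      · have h0 : sn⁻¹ = Real.cos ((2 * ((0 : ℕ) : ℝ) + 1) * θ) / su := by
          norm_num [hcosθ]
          field_simp
        exact_mod_cast congrArg Complex.ofReal h0
    | succ k ih =>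
      intro i
      rw [Function.iterate_succ_apply', hG, hR]
      set x := G^[k] Ψ with hx
      set φ := (2 * (k : ℝ) + 1) * θ with hφ
      have hOx : ∀ j, O x j = if j ∈ M then ((-(Real.sin φ / st) : ℝ) : ℂ)
          else ((Real.cos φ / su : ℝ) : ℂ) := by
        intro j
        rw [hO, ih j]
        split <;> simp
      have hc : (inner ℂ Ψ (O x) : ℂ)
          = ((sn⁻¹ * ((t : ℝ) * (-(Real.sin φ / st)) + ((n : ℝ) - t) * (Real.cos φ / su)) : ℝ) : ℂ) := by
        rw [PiLp.inner_apply]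
        simp only [RCLike.inner_apply, hΨ, hOx, mul_ite, ite_mul]
        rw [hsum]
        simp only [map_inv₀, Complex.conj_ofReal]
        push_cast
        ring
      have happ : ((2 * (inner ℂ Ψ (O x) : ℂ)) • Ψ - O x) i
          = 2 * (inner ℂ Ψ (O x) : ℂ) * Ψ i - O x i := by
        simp [PiLp.sub_apply, PiLp.smul_apply, smul_eq_mul]
      rw [happ, hc, hΨ i, hOx i]
      have hφ' : (2 * ((k + 1 : ℕ) : ℝ) + 1) * θ = φ + 2 * θ := by
        rw [hφ]; push_cast; ring
      rw [hφ']
      have hsin2 : Real.sin (φ + 2 * θ)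
          = Real.sin φ * ((su / sn) ^ 2 - (st / sn) ^ 2)
            + Real.cos φ * (2 * (st / sn) * (su / sn)) := by
        rw [Real.sin_add, Real.sin_two_mul, Real.cos_two_mul', hsinθ, hcosθ]
      have hcos2 : Real.cos (φ + 2 * θ)
          = Real.cos φ * ((su / sn) ^ 2 - (st / sn) ^ 2)
            - Real.sin φ * (2 * (st / sn) * (su / sn)) := by
        rw [Real.cos_add, Real.sin_two_mul, Real.cos_two_mul', hsinθ, hcosθ]
      have hmark : 2 * (sn⁻¹ * ((t : ℝ) * (-(Real.sin φ / st))
            + ((n : ℝ) - (t : ℝ)) * (Real.cos φ / su))) * sn⁻¹ + Real.sin φ / st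
          = (Real.sin φ * ((su / sn) ^ 2 - (st / sn) ^ 2)
            + Real.cos φ * (2 * (st / sn) * (su / sn))) / st := by
        rw [← hsu2, ← hst2]
        exact grover_marked sn st su (Real.sin φ) (Real.cos φ) hsn0.ne' hst0.ne' hsu0.ne' hp
      have hunmark : 2 * (sn⁻¹ * ((t : ℝ) * (-(Real.sin φ / st))
            + ((n : ℝ) - (t : ℝ)) * (Real.cos φ / su))) * sn⁻¹ - Real.cos φ / su
          = (Real.cos φ * ((su / sn) ^ 2 - (st / sn) ^ 2)
            - Real.sin φ * (2 * (st / sn) * (su / sn))) / su := by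
        rw [← hsu2, ← hst2]
        exact grover_unmarked sn st su (Real.sin φ) (Real.cos φ) hsn0.ne' hst0.ne' hsu0.ne' hp
      split
      · rw [hsin2]
        have hmc := congrArg Complex.ofReal hmark
        push_cast at hmc ⊢
        linear_combination hmc
      · rw [hcos2]
        have huc := congrArg Complex.ofReal hunmark
        push_cast at huc ⊢
        linear_combination huc
  intro k
  have hterm : ∀ i ∈ M, ‖(G^[k] Ψ) i‖ ^ 2 = (Real.sin ((2 * (k : ℝ) + 1) * θ) / st) ^ 2 := by
    intro i hi
    rw [key k i, if_pos hi, Complex.norm_real, Real.norm_eq_abs, sq_abs]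
  rw [Finset.sum_congr rfl hterm, Finset.sum_const, ← ht, nsmul_eq_mul]
  have hst2' : st ^ 2 = (t : ℝ) := by rw [sq, hst2]
  rw [div_pow, hst2']
  field_simp
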